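/- arXiv:1011.5460 — 8 statements merged into one kernel-verified Lean document; each statement's English description precedes it below -/
import Mathlib

section
/- For a k-regular graph G with k ≥ 1, the matrix Q = (2/k)·N_in^T·N_in − I satisfies Q^2 = I. -/
open Matrix Polynomial

variable {V : Type*} [Fintype V] [DecidableEq V]

/-- Head incidence matrix of the symmetric digraph: entry (v, d) is 1 iff v is the head of d. -/
def Nin (G : SimpleGraph V) : Matrix V G.Dart ℝ :=
  Matrix.of fun v d => if d.snd = v then 1 else 0

/-- Tail incidence matrix: entry (v, d) is 1 iff v is the tail of d. -/
def Nout (G : SimpleGraph V) : Matrix V G.Dart ℝ :=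
  Matrix.of fun v d => if d.fst = v then 1 else 0

/-- Arc-reversal permutation matrix. -/
def Prev (G : SimpleGraph V) : Matrix G.Dart G.Dart ℝ :=
  Matrix.of fun d e => if e = d.symm then 1 else 0

/-- Positive support of a matrix. -/
noncomputable def posSupport {m n : Type*} (M : Matrix m n ℝ) : Matrix m n ℝ :=
  Matrix.of fun i j => if 0 < M i j then 1 else 0

lemma dart_snd_fiber_card (G : SimpleGraph V) [DecidableRel G.Adj] (v : V) :
    (Finset.univ.filter fun d : G.Dart => d.snd = v).card = G.degree v := by
  rw [← G.dart_fst_fiber_card_eq_degree v]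
  apply Finset.card_bij (fun d _ => d.symm)
  · intro d hd; simp_all [SimpleGraph.Dart.symm]
  · intro d₁ h₁ d₂ h₂ h
    simpa using congrArg SimpleGraph.Dart.symm h
  · intro d hd
    refine ⟨d.symm, ?_, by simp⟩
    simp_all [SimpleGraph.Dart.symm]

lemma M_entry (G : SimpleGraph V) [DecidableRel G.Adj] (d e : G.Dart) :
    ((Nin G)ᵀ * Nin G) d e = if d.snd = e.snd then 1 else 0 := by
  simp only [Matrix.mul_apply, Matrix.transpose_apply, Nin, Matrix.of_apply]
  rw [Finset.sum_eq_single d.snd]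
  · simp [eq_comm]
  · intro b _ hb; simp [Ne.symm hb]
  · simp

lemma M_sq (G : SimpleGraph V) [DecidableRel G.Adj] (k : ℕ)
    (hreg : G.IsRegularOfDegree k) :
    ((Nin G)ᵀ * Nin G) * ((Nin G)ᵀ * Nin G) = (k : ℝ) • ((Nin G)ᵀ * Nin G) := by
  ext d e
  rw [Matrix.mul_apply]
  simp only [M_entry, Matrix.smul_apply, smul_eq_mul]
  by_cases h : d.snd = e.snd
  · simp only [h, if_true, mul_one]
    have key : ∀ x : G.Dart,
        (if e.snd = x.snd then (1:ℝ) else 0) * (if x.snd = e.snd then 1 else 0)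
          = if x.snd = e.snd then 1 else 0 := by
      intro x; by_cases hx : x.snd = e.snd <;> simp [hx, eq_comm]
    rw [Finset.sum_congr rfl (fun x _ => key x), Finset.sum_boole,
      dart_snd_fiber_card, hreg e.snd]
  · simp only [h, if_false, mul_zero]
    apply Finset.sum_eq_zero
    intro f _
    by_cases h1 : d.snd = f.snd
    · rw [if_neg (fun hf => h (h1.trans hf)), mul_zero]
    · rw [if_neg h1, zero_mul]

/-- For a k-regular graph with k ≥ 1, Q = (2/k) N_in^T N_in - I satisfies Q^2 = I. -/
theorem stmt5 (G : SimpleGraph V) [DecidableRel G.Adj] (k : ℕ) (hk : 1 ≤ k)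
    (hreg : G.IsRegularOfDegree k) :
    ((2 / (k : ℝ)) • ((Nin G)ᵀ * Nin G) - 1) * ((2 / (k : ℝ)) • ((Nin G)ᵀ * Nin G) - 1) = 1 := by
  have hk' : (k : ℝ) ≠ 0 := Nat.cast_ne_zero.mpr (by omega)
  have hM := M_sq G k hreg
  set M := (Nin G)ᵀ * Nin G with hMdef
  rw [sub_mul, mul_sub, mul_sub, Matrix.smul_mul, Matrix.mul_smul, hM]
  rw [smul_smul, smul_smul]
  rw [Matrix.one_mul, Matrix.mul_one]
  have h4 : 2 / (k : ℝ) * (2 / (k : ℝ)) * (k : ℝ) = 2 / (k : ℝ) + 2 / (k : ℝ) := by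
    field_simp; ring
  rw [one_mul, h4, add_smul]
  abel
end

section
/- For a k-regular graph G with k ≥ 2, the positive support of the quantum walk transition matrix U = (2/k)·N_out^T·N_in − P equals N_out^T·N_in − P. (The positive support of a matrix M is the 0-1 matrix with entry 1 exactly where M has a positive entry.) -/
open Matrix Polynomial

variable {V : Type*} [Fintype V] [DecidableEq V]

lemma mul_entry (G : SimpleGraph V) (d e : G.Dart) :
    ((Nout G)ᵀ * Nin G) d e = if e.snd = d.fst then 1 else 0 := by
  simp [Matrix.mul_apply, Nout, Nin, Matrix.transpose_apply, ite_and, eq_comm]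

/-- For a k-regular graph with k ≥ 2, the positive support of the transition matrix
U = (2/k) N_out^T N_in - P equals N_out^T N_in - P. -/
theorem stmt6 (G : SimpleGraph V) [DecidableRel G.Adj] (k : ℕ) (hk : 2 ≤ k)
    (hreg : G.IsRegularOfDegree k) :
    posSupport ((2 / (k : ℝ)) • ((Nout G)ᵀ * Nin G) - Prev G) =
      (Nout G)ᵀ * Nin G - Prev G := by
  have hk0 : (0:ℝ) < (k:ℝ) := by positivity
  ext d e
  simp only [posSupport, Matrix.sub_apply, Matrix.smul_apply, Matrix.of_apply, Prev,
    mul_entry, smul_eq_mul]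
  by_cases h2 : e.snd = d.fst
  · by_cases h1 : e = d.symm
    · simp only [h1, h2, if_pos rfl, if_pos rfl]
      have hdiv : 2 / (k:ℝ) ≤ 1 := by
        rw [div_le_one hk0]; exact_mod_cast hk
      have : ¬ (0 < 2 / (k:ℝ) * 1 - 1) := by
        rw [mul_one, sub_pos]; exact not_lt.mpr hdiv
      simp [this, hdiv]
    · simp only [h2, if_pos rfl, if_neg h1]
      have : (0:ℝ) < 2 / (k:ℝ) * 1 - 0 := by
        rw [mul_one, sub_zero]; positivity
      have : k ≠ 0 := by omega
      simp_all
  · have h1 : e ≠ d.symm := by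
      intro h; exact h2 (by rw [h]; rfl)
    simp [h2, h1]
end

section
/- Let S = N_out^T·N_in − P for a k-regular graph G with adjacency matrix A. Then S·N_out^T = N_out^T·A − N_in^T. -/
open Matrix Polynomial

variable {V : Type*} [Fintype V] [DecidableEq V]

lemma dart_sum_aux (G : SimpleGraph V) [DecidableRel G.Adj] (a b : V) :
    (∑ e : G.Dart, (if e.snd = b then (1:ℝ) else 0) * (if e.fst = a then 1 else 0))
      = if G.Adj a b then 1 else 0 := by
  by_cases h : G.Adj a b
  · rw [if_pos h, Finset.sum_eq_single (⟨(a,b),h⟩ : G.Dart)]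
    · simp
    · intro e _ hne
      by_cases h1 : e.snd = b
      · by_cases h2 : e.fst = a
        · exact absurd (SimpleGraph.Dart.ext _ _ (Prod.ext h2 h1)) hne
        · simp [h2]
      · simp [h1]
    · simp
  · rw [if_neg h, Finset.sum_eq_zero]
    intro e _
    by_cases h1 : e.snd = b
    · by_cases h2 : e.fst = a
      · exact absurd (h2 ▸ h1 ▸ e.adj) h
      · simp [h2]
    · simp [h1]

/-- For S = N_out^T N_in - P on a k-regular graph, S * N_out^T = N_out^T A - N_in^T. -/
theorem stmt8 (G : SimpleGraph V) [DecidableRel G.Adj] (k : ℕ)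
    (hreg : G.IsRegularOfDegree k) :
    ((Nout G)ᵀ * Nin G - Prev G) * (Nout G)ᵀ =
      (Nout G)ᵀ * G.adjMatrix ℝ - (Nin G)ᵀ := by
  ext d v
  simp only [Matrix.sub_apply, Matrix.mul_apply, Matrix.transpose_apply, Nin, Nout, Prev,
    Matrix.of_apply, SimpleGraph.adjMatrix_apply, Matrix.sub_mul, sub_mul, Finset.sum_sub_distrib]
  have h1 : ∀ e : G.Dart, (∑ w, (if d.fst = w then (1:ℝ) else 0) * (if e.snd = w then 1 else 0))
      = if e.snd = d.fst then 1 else 0 := by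
    intro e
    simp [ite_and, eq_comm]
  have h2 : (∑ e : G.Dart, (if e = d.symm then (1:ℝ) else 0) * (if e.fst = v then 1 else 0))
      = if d.snd = v then 1 else 0 := by
    rw [Finset.sum_eq_single d.symm]
    · simp [SimpleGraph.Dart.symm]; congr
    · intro e _ hne; simp [hne]
    · simp
  have hA : (∑ e : G.Dart, (∑ w, (if d.fst = w then (1:ℝ) else 0) * (if e.snd = w then 1 else 0))
      * (if e.fst = v then 1 else 0)) = if G.Adj v d.fst then 1 else 0 := by
    simp_rw [h1]; exact dart_sum_aux G v d.fst
  rw [hA, h2]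
  simp only [ite_mul, one_mul, zero_mul, Finset.sum_ite_eq, Finset.mem_univ, if_true]
  simp only [G.adj_comm]
end

section
/- Let S = N_out^T·N_in − P for a k-regular graph G, and let z be an eigenvector of the adjacency matrix A with eigenvalue λ. Then y = N_out^T·z satisfies S²y − λ·S·y + (k−1)·y = 0. -/
open Matrix Polynomial

variable {V : Type*} [Fintype V] [DecidableEq V]

lemma sum_darts_snd (G : SimpleGraph V) [DecidableRel G.Adj] (v : V) (f : G.Dart → ℝ) (g : V → ℝ)
    (hf : ∀ e : G.Dart, e.snd = v → f e = g e.fst) :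
    (∑ e : G.Dart, if e.snd = v then f e else 0) = ∑ u ∈ G.neighborFinset v, g u := by
  classical
  rw [← Finset.sum_filter]
  refine Finset.sum_bij' (fun e _ => e.fst)
    (fun u hu => (⟨(v, u), by simpa using hu⟩ : G.Dart).symm) ?_ ?_ ?_ ?_ ?_
  · intro e he
    simp only [Finset.mem_filter, Finset.mem_univ, true_and] at he
    simp only [SimpleGraph.mem_neighborFinset]
    exact he ▸ e.adj.symm
  · intro u hu; simp [SimpleGraph.Dart.symm]
  · intro e he
    simp only [Finset.mem_filter, Finset.mem_univ, true_and] at he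
    apply SimpleGraph.Dart.ext
    simp [SimpleGraph.Dart.symm, Prod.ext_iff, he]
  · intro u hu; simp [SimpleGraph.Dart.symm]
  · intro e he
    simp only [Finset.mem_filter, Finset.mem_univ, true_and] at he
    exact hf e he

lemma mulVec_apply' (G : SimpleGraph V) [DecidableRel G.Adj] (w : G.Dart → ℝ) (d : G.Dart) :
    (((Nout G)ᵀ * Nin G - Prev G).mulVec w) d
      = (∑ e : G.Dart, if e.snd = d.fst then w e else 0) - w d.symm := by
  classical
  rw [Matrix.sub_mulVec]
  have h1 : ((Nin G).mulVec w) d.fst = ∑ e : G.Dart, if e.snd = d.fst then w e else 0 := by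
    simp [Nin, Matrix.mulVec, dotProduct, ite_mul, one_mul, zero_mul]
  have h2 : (((Nout G)ᵀ).mulVec ((Nin G).mulVec w)) d = ((Nin G).mulVec w) d.fst := by
    simp [Nout, Matrix.mulVec, dotProduct, transpose_apply, ite_mul, one_mul, zero_mul]
  have h3 : ((Prev G).mulVec w) d = w d.symm := by
    simp [Prev, Matrix.mulVec, dotProduct, ite_mul, one_mul, zero_mul]
  simp only [Pi.sub_apply, h3, ← Matrix.mulVec_mulVec, h2, h1]

/-- If z is an eigenvector of A with eigenvalue λ and y = N_out^T z, then
S²y - λ S y + (k-1) y = 0 for S = N_out^T N_in - P. -/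
theorem stmt9 (G : SimpleGraph V) [DecidableRel G.Adj] (k : ℕ)
    (hreg : G.IsRegularOfDegree k) (lam : ℝ) (z : V → ℝ)
    (hz : (G.adjMatrix ℝ).mulVec z = lam • z)
    (S : Matrix G.Dart G.Dart ℝ) (hS : S = (Nout G)ᵀ * Nin G - Prev G)
    (y : G.Dart → ℝ) (hy : y = ((Nout G)ᵀ).mulVec z) :
    S.mulVec (S.mulVec y) - lam • S.mulVec y + ((k : ℝ) - 1) • y = 0 := by
  classical
  subst hS
  have hAz : ∀ v : V, ∑ u ∈ G.neighborFinset v, z u = lam * z v := by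
    intro v
    have := congrFun hz v
    simpa [SimpleGraph.adjMatrix_mulVec_apply] using this
  have hyd : ∀ d : G.Dart, y d = z d.fst := by
    intro d
    simp [hy, Nout, Matrix.mulVec, dotProduct, transpose_apply, ite_mul, one_mul, zero_mul]
  have hSy : ∀ d : G.Dart,
      (((Nout G)ᵀ * Nin G - Prev G).mulVec y) d = lam * z d.fst - z d.snd := by
    intro d
    rw [mulVec_apply']
    rw [sum_darts_snd G d.fst y z (fun e _ => hyd e)]
    rw [hAz]
    simp [hyd]
  have hSSy : ∀ d : G.Dart,
      (((Nout G)ᵀ * Nin G - Prev G).mulVec (((Nout G)ᵀ * Nin G - Prev G).mulVec y)) d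
        = lam * lam * z d.fst - (k : ℝ) * z d.fst - lam * z d.snd + z d.fst := by
    intro d
    rw [mulVec_apply']
    rw [sum_darts_snd G d.fst _ (fun u => lam * z u - z d.fst)
      (fun e he => by rw [hSy e, he])]
    rw [Finset.sum_sub_distrib, ← Finset.mul_sum, Finset.sum_const, hAz,
      G.card_neighborFinset_eq_degree, hreg d.fst, hSy]
    simp [SimpleGraph.Dart.symm]
    ring
  funext d
  simp only [Pi.add_apply, Pi.sub_apply, Pi.smul_apply, smul_eq_mul, Pi.zero_apply,
    hSSy d, hSy d, hyd d]
  ring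
end

section
/- Let S = N_out^T·N_in − P. The subspace K = col(N_in^T) + col(N_out^T) of the arc-indexed vector space is invariant under S. -/
open Matrix Polynomial

variable {V : Type*} [Fintype V] [DecidableEq V]

lemma Prev_mul_NinT (G : SimpleGraph V) [DecidableRel G.Adj] : Prev G * (Nin G)ᵀ = (Nout G)ᵀ := by
  ext d v
  simp only [Prev, Nin, Nout, Matrix.mul_apply, Matrix.transpose_apply, Matrix.of_apply]
  rw [Finset.sum_eq_single d.symm]
  · simp
  · intro e _ he; simp [he]
  · simp

lemma Prev_mul_NoutT (G : SimpleGraph V) [DecidableRel G.Adj] : Prev G * (Nout G)ᵀ = (Nin G)ᵀ := by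
  ext d v
  simp only [Prev, Nin, Nout, Matrix.mul_apply, Matrix.transpose_apply, Matrix.of_apply]
  rw [Finset.sum_eq_single d.symm]
  · simp
  · intro e _ he; simp [he]
  · simp

/-- K = col(N_in^T) + col(N_out^T) is invariant under S = N_out^T N_in - P. -/
theorem stmt10 (G : SimpleGraph V) [DecidableRel G.Adj] (k : ℕ)
    (hreg : G.IsRegularOfDegree k)
    (K : Submodule ℝ (G.Dart → ℝ))
    (hK : K = LinearMap.range (Matrix.toLin' (Nin G)ᵀ) ⊔
              LinearMap.range (Matrix.toLin' (Nout G)ᵀ)) :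
    ∀ y ∈ K, ((Nout G)ᵀ * Nin G - Prev G).mulVec y ∈ K := by
  subst hK
  have memL : ∀ w, (Nin G)ᵀ.mulVec w ∈ (LinearMap.range (Matrix.toLin' (Nin G)ᵀ) ⊔
      LinearMap.range (Matrix.toLin' (Nout G)ᵀ)) := fun w =>
    Submodule.mem_sup_left ⟨w, Matrix.toLin'_apply _ _⟩
  have memR : ∀ w, (Nout G)ᵀ.mulVec w ∈ (LinearMap.range (Matrix.toLin' (Nin G)ᵀ) ⊔
      LinearMap.range (Matrix.toLin' (Nout G)ᵀ)) := fun w =>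
    Submodule.mem_sup_right ⟨w, Matrix.toLin'_apply _ _⟩
  intro y hy
  obtain ⟨a, ⟨x, rfl⟩, b, ⟨z, rfl⟩, rfl⟩ := Submodule.mem_sup.mp hy
  rw [Matrix.toLin'_apply, Matrix.toLin'_apply, Matrix.mulVec_add]
  refine Submodule.add_mem _ ?_ ?_
  · rw [Matrix.sub_mulVec, Matrix.mulVec_mulVec, Matrix.mulVec_mulVec, Matrix.mul_assoc,
      Prev_mul_NinT, ← Matrix.mulVec_mulVec, ← Matrix.mulVec_mulVec]
    exact Submodule.sub_mem _ (memR _) (memR _)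
  · rw [Matrix.sub_mulVec, Matrix.mulVec_mulVec, Matrix.mulVec_mulVec, Matrix.mul_assoc,
      Prev_mul_NoutT, ← Matrix.mulVec_mulVec, ← Matrix.mulVec_mulVec]
    exact Submodule.sub_mem _ (memR _) (memL _)
end

section
/- Let G be a connected k-regular graph on n vertices with k ≥ 2 and S = S^+(U(G)) = N_out^T·N_in − P. The eigenvalues of S are: k−1 with multiplicity 1; for each eigenvalue λ ≠ k of the adjacency matrix A (with multiplicity), the two roots (λ ± √(λ² − 4(k−1)))/2; and additionally +1 with multiplicity n(k−2)/2 + 1 and −1 with multiplicity n(k−2)/2. -/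
open Matrix Polynomial

set_option maxHeartbeats 2000000
set_option synthInstance.maxHeartbeats 1000000

variable {V : Type*} [Fintype V] [DecidableEq V]

/-- Head incidence matrix of the symmetric digraph, over the complex numbers. -/
def NinC (G : SimpleGraph V) : Matrix V G.Dart ℂ :=
  Matrix.of fun v d => if d.snd = v then 1 else 0

/-- Tail incidence matrix, over the complex numbers. -/
def NoutC (G : SimpleGraph V) : Matrix V G.Dart ℂ :=
  Matrix.of fun v d => if d.fst = v then 1 else 0

/-- Arc-reversal permutation matrix, over the complex numbers. -/
def PrevC (G : SimpleGraph V) : Matrix G.Dart G.Dart ℂ :=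
  Matrix.of fun d e => if e = d.symm then 1 else 0

/- ---------------------------------------------------------------------------
Auxiliary lemmas
--------------------------------------------------------------------------- -/

lemma ringHom_charpoly {n R S : Type*} [Fintype n] [DecidableEq n] [CommRing R] [CommRing S]
    (f : R[X] →+* S) (M : Matrix n n R) :
    f M.charpoly = ((f X) • (1 : Matrix n n S) - M.map (f.comp C)).det := by
  rw [Matrix.charpoly, RingHom.map_det]
  congr 1
  ext i j
  by_cases h : i = j <;>
    simp [h, Matrix.charmatrix_apply, Matrix.map_apply, Matrix.one_apply,
      Matrix.diagonal_apply]

lemma Nin_mul_NoutT (G : SimpleGraph V) [DecidableRel G.Adj] :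
    NinC G * (NoutC G)ᵀ = G.adjMatrix ℂ := by
  ext u v
  simp only [Matrix.mul_apply, NinC, NoutC, Matrix.transpose_apply, Matrix.of_apply,
    SimpleGraph.adjMatrix_apply]
  have key : ∀ d : G.Dart,
      ((if d.snd = u then (1:ℂ) else 0) * (if d.fst = v then 1 else 0))
        = if d.toProd = (v, u) then 1 else 0 := by
    intro d
    split_ifs with h1 h2 h3 h3 h2 h3 h3 <;> simp_all [Prod.ext_iff]
  rw [Finset.sum_congr rfl fun d _ => key d]
  by_cases h : G.Adj u v
  · rw [Finset.sum_eq_single_of_mem (SimpleGraph.Dart.mk (v, u) h.symm) (Finset.mem_univ _)]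
    · simp [h]
    · intro d _ hd
      rw [if_neg]
      intro hp
      exact hd (SimpleGraph.Dart.ext _ _ hp)
  · rw [if_neg h, Finset.sum_eq_zero]
    intro d _
    rw [if_neg]
    intro hp
    exact h (by have := d.adj; rw [hp] at this; exact this.symm)

lemma Nout_mul_NoutT (G : SimpleGraph V) [DecidableRel G.Adj] {k : ℕ}
    (hreg : G.IsRegularOfDegree k) :
    NoutC G * (NoutC G)ᵀ = (k : ℂ) • 1 := by
  ext u v
  simp only [Matrix.mul_apply, NoutC, Matrix.transpose_apply, Matrix.of_apply,
    Matrix.smul_apply, Matrix.one_apply]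
  by_cases h : u = v
  · subst h
    simp only [if_pos rfl, smul_eq_mul, mul_one]
    have : ∀ d : G.Dart, ((if d.fst = u then (1:ℂ) else 0) * (if d.fst = u then 1 else 0))
        = if d.fst = u then 1 else 0 := by intro d; split_ifs <;> simp
    rw [Finset.sum_congr rfl fun d _ => this d, Finset.sum_boole]
    have := G.dart_fst_fiber_card_eq_degree u
    rw [show ({d : G.Dart | d.fst = u} : Finset _) = Finset.univ.filter (fun d => d.fst = u)
      from rfl] at this
    rw [this, hreg u]
    simp
  · rw [if_neg h, smul_zero, Finset.sum_eq_zero]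
    intro d _
    split_ifs with h1 h2 <;> simp_all

lemma Nin_mul_Prev (G : SimpleGraph V) [DecidableRel G.Adj] :
    NinC G * PrevC G = NoutC G := by
  ext v d
  simp only [Matrix.mul_apply, NinC, NoutC, PrevC, Matrix.of_apply]
  have key : ∀ e : G.Dart, ((if e.snd = v then (1:ℂ) else 0) * (if d = e.symm then 1 else 0))
      = if e = d.symm then (if e.snd = v then (1:ℂ) else 0) else 0 := by
    intro e
    have h2 : (d = e.symm) = (e = d.symm) := by
      apply propext; constructor <;> rintro rfl <;> simp
    simp only [h2]
    split_ifs <;> ring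
  rw [Finset.sum_congr rfl fun e _ => key e, Finset.sum_ite_eq' Finset.univ d.symm]
  simp [SimpleGraph.Dart.symm]
  split_ifs <;> simp_all

lemma Prev_mul_Prev (G : SimpleGraph V) [DecidableRel G.Adj] :
    PrevC G * PrevC G = 1 := by
  ext d f
  simp only [Matrix.mul_apply, PrevC, Matrix.of_apply, Matrix.one_apply]
  have key : ∀ e : G.Dart, ((if e = d.symm then (1:ℂ) else 0) * (if f = e.symm then 1 else 0))
      = if e = d.symm then (if f = e.symm then (1:ℂ) else 0) else 0 := by
    intro e; split_ifs <;> ring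
  rw [Finset.sum_congr rfl fun e _ => key e, Finset.sum_ite_eq' Finset.univ d.symm]
  simp only [Finset.mem_univ, if_true, SimpleGraph.Dart.symm_symm]
  by_cases h : d = f <;> simp [h, eq_comm]

lemma charpoly_PrevC (G : SimpleGraph V) [DecidableRel G.Adj] :
    (PrevC G).charpoly = (X ^ 2 - 1) ^ G.edgeFinset.card := by
  classical
  have hm2 : Fintype.card G.Dart = 2 * G.edgeFinset.card := G.dart_card_eq_twice_card_edges
  set ef := Fintype.equivFin G.Dart with hef
  set s : G.Dart → ℂ[X] := fun d => if ef d < ef d.symm then 1 else -1 with hs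
  have hss : ∀ d, s d * s d = 1 := by
    intro d; by_cases h : ef d < ef d.symm <;> simp [hs, h]
  have hsymm : ∀ d : G.Dart, s d * s d.symm = -1 := by
    intro d
    have hne : ef d ≠ ef d.symm := fun h => d.symm_ne (ef.injective h).symm
    simp only [hs, SimpleGraph.Dart.symm_symm]
    by_cases h : ef d < ef d.symm
    · rw [if_pos h, if_neg (lt_asymm h)]; ring
    · rw [if_neg h, if_pos (lt_of_le_of_ne (not_lt.mp h) hne.symm)]; ring
  set D : Matrix G.Dart G.Dart ℂ[X] := Matrix.diagonal s with hD
  set Pc : Matrix G.Dart G.Dart ℂ[X] := (PrevC G).map C with hPc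
  have hPc2 : Pc * Pc = 1 := by
    rw [hPc, ← Matrix.map_mul, Prev_mul_Prev, Matrix.map_one _ (map_zero C) (_root_.map_one C)]
  have hkey : D * ((X:ℂ[X]) • 1 + Pc) * D = (X:ℂ[X]) • 1 - Pc := by
    apply Matrix.ext
    intro d f
    rw [hD, Matrix.mul_diagonal, Matrix.diagonal_mul]
    simp only [Matrix.add_apply, Matrix.sub_apply, Matrix.smul_apply, Matrix.one_apply,
      Matrix.map_apply, hPc, PrevC, Matrix.of_apply, smul_eq_mul]
    split_ifs with h1 h2 h2
    · subst h1; exact absurd h2 (Ne.symm d.symm_ne)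
    · subst h1; simp only [map_zero]; linear_combination (X : ℂ[X]) * hss d
    · subst h2; simp only [Polynomial.C_1]; linear_combination hsymm d
    · simp only [map_zero]; ring
  have hDD : D * D = 1 := by
    rw [hD, Matrix.diagonal_mul_diagonal]
    rw [show (fun d => s d * s d) = fun _ : G.Dart => (1 : ℂ[X]) from funext hss]
    exact Matrix.diagonal_one
  have hdet : ((X:ℂ[X]) • 1 + Pc).det = ((X:ℂ[X]) • 1 - Pc).det := by
    have h1 := congrArg Matrix.det hkey
    rw [Matrix.det_mul, Matrix.det_mul] at h1
    have h2 : D.det * D.det = 1 := by rw [← Matrix.det_mul, hDD, Matrix.det_one]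
    linear_combination h1 - ((X:ℂ[X]) • 1 + Pc).det * h2
  have hprod : (((X:ℂ[X]) • 1 - Pc) * ((X:ℂ[X]) • 1 + Pc))
      = ((X^2 - 1 : ℂ[X])) • (1 : Matrix G.Dart G.Dart ℂ[X]) := by
    rw [Matrix.sub_mul, Matrix.mul_add, Matrix.mul_add, hPc2]
    simp only [Matrix.smul_mul, Matrix.mul_smul, one_mul, mul_one, smul_smul, ← pow_two,
      _root_.smul_pow, one_pow]
    rw [sub_smul, one_smul]
    abel
  have hmdet : ((X:ℂ[X]) • 1 - Pc).det * ((X:ℂ[X]) • 1 + Pc).det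
      = (X^2-1)^(Fintype.card G.Dart) := by
    rw [← Matrix.det_mul, hprod, Matrix.det_smul, Matrix.det_one, mul_one]
  have hcp : (PrevC G).charpoly = ((X:ℂ[X]) • 1 - Pc).det := by
    have h := ringHom_charpoly (RingHom.id ℂ[X]) (PrevC G)
    simpa [hPc] using h
  have hqmonic : ((X^2 - 1 : ℂ[X]) ^ G.edgeFinset.card).Monic := by
    apply Polynomial.Monic.pow
    have := Polynomial.monic_X_pow_sub_C (1:ℂ) two_ne_zero
    simpa using this
  have hpp : (PrevC G).charpoly * (PrevC G).charpoly = (X^2-1)^(Fintype.card G.Dart) := by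
    have h3 : ((X:ℂ[X]) • 1 - Pc).det * ((X:ℂ[X]) • 1 - Pc).det
        = ((X:ℂ[X]) • 1 - Pc).det * ((X:ℂ[X]) • 1 + Pc).det := by rw [hdet]
    rw [hcp, h3, hmdet]
  have hqq : ((X^2 - 1 : ℂ[X]) ^ G.edgeFinset.card) * ((X^2 - 1 : ℂ[X]) ^ G.edgeFinset.card)
      = (X^2-1)^(Fintype.card G.Dart) := by
    rw [← pow_add, hm2, two_mul]
  have hzero : ((PrevC G).charpoly - (X^2 - 1 : ℂ[X]) ^ G.edgeFinset.card)
      * ((PrevC G).charpoly + (X^2 - 1 : ℂ[X]) ^ G.edgeFinset.card) = 0 := by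
    linear_combination hpp - hqq
  rcases mul_eq_zero.mp hzero with h | h
  · exact sub_eq_zero.mp h
  · exfalso
    have hneg : (PrevC G).charpoly = -((X^2 - 1 : ℂ[X]) ^ G.edgeFinset.card) :=
      eq_neg_of_add_eq_zero_left h
    have h1 : (PrevC G).charpoly.leadingCoeff = 1 := (PrevC G).charpoly_monic
    rw [hneg, leadingCoeff_neg, hqmonic.leadingCoeff] at h1
    norm_num at h1

lemma det_smul_one_add_mul {m n K : Type*} [Fintype m] [Fintype n] [DecidableEq m]
    [DecidableEq n] [Field K] {c : K} (hc : c ≠ 0) (U : Matrix m n K) (W : Matrix n m K) :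
    (c • 1 + U * W).det * c ^ (Fintype.card n) = c ^ (Fintype.card m) * (c • 1 + W * U).det := by
  have k1 : c • (1 : Matrix m m K) + U * W = c • (1 + (c⁻¹ • U) * W) := by
    rw [smul_add, Matrix.smul_mul, smul_smul, mul_inv_cancel₀ hc, one_smul]
  have k2 : c • (1 : Matrix n n K) + W * U = c • (1 + (c⁻¹ • W) * U) := by
    rw [smul_add, Matrix.smul_mul, smul_smul, mul_inv_cancel₀ hc, one_smul]
  rw [k1, k2, Matrix.det_smul, Matrix.det_smul, Matrix.det_one_add_mul_comm,
    Matrix.mul_smul, ← Matrix.smul_mul]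
  ring

/-- Spectrum of S⁺(U) = N_out^T N_in - P for a connected k-regular graph on n vertices,
k ≥ 2: eigenvalue k-1 with multiplicity 1; the two roots of x² - λx + (k-1) for each
eigenvalue λ ≠ k of A (with multiplicity); +1 with multiplicity n(k-2)/2 + 1 and -1 with
multiplicity n(k-2)/2.  Stated via the characteristic polynomial. -/
theorem stmt15 (G : SimpleGraph V) [DecidableRel G.Adj] (k : ℕ) (hk : 2 ≤ k)
    (hreg : G.IsRegularOfDegree k) (hconn : G.Connected)
    (μ : Multiset ℂ) (hμ : μ = ((G.adjMatrix ℂ).charpoly.roots).erase (k : ℂ)) :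
    ((NoutC G)ᵀ * NinC G - PrevC G).charpoly =
      (X - C ((k : ℂ) - 1)) *
        (μ.map (fun l => X ^ 2 - C l * X + C ((k : ℂ) - 1))).prod *
        (X - 1) ^ (Fintype.card V * (k - 2) / 2 + 1) *
        (X + 1) ^ (Fintype.card V * (k - 2) / 2) := by
  classical
  have hV : Nonempty V := hconn.nonempty
  set n := Fintype.card V with hn
  set A := G.adjMatrix ℂ with hA
  -- k is a root of the characteristic polynomial of A
  have hkroot : (k : ℂ) ∈ A.charpoly.roots := by
    rw [Polynomial.mem_roots A.charpoly_monic.ne_zero]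
    have h1 := ringHom_charpoly (Polynomial.evalRingHom ((k : ℂ))) A
    have h2 : A.map ⇑((Polynomial.evalRingHom ((k:ℂ))).comp C) = A := by
      ext i j; simp
    rw [h2] at h1
    have h3 : (((k:ℂ)) • (1 : Matrix V V ℂ) - A).det = 0 := by
      rw [← Matrix.exists_mulVec_eq_zero_iff]
      refine ⟨Function.const V (1:ℂ), ?_, ?_⟩
      · intro h0
        have := congrFun h0 (Classical.arbitrary V)
        simpa using this
      · funext v
        rw [Matrix.sub_mulVec, Matrix.smul_mulVec, Matrix.one_mulVec]
        simp only [Pi.sub_apply, Pi.smul_apply, Pi.zero_apply, smul_eq_mul, mul_one, hA]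
        rw [SimpleGraph.adjMatrix_mulVec_const_apply_of_regular hreg]
        simp
    simp only [Polynomial.IsRoot.def]
    have h4 : Polynomial.eval ((k:ℂ)) A.charpoly
        = (Polynomial.evalRingHom ((k:ℂ))) A.charpoly := rfl
    rw [h4, h1]
    simpa using h3
  have hsplit : A.charpoly.Splits := IsAlgClosed.splits _
  have hcard : A.charpoly.roots.card = n := by
    rw [Polynomial.splits_iff_card_roots.mp hsplit, A.charpoly_natDegree_eq_dim]
  have hfact : A.charpoly = (A.charpoly.roots.map (fun a => X - C a)).prod :=
    hsplit.eq_prod_roots_of_monic A.charpoly_monic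
  -- numerics
  set E := G.edgeFinset.card with hE
  have hm2 : Fintype.card G.Dart = 2 * E := G.dart_card_eq_twice_card_edges
  have hmnk : Fintype.card G.Dart = n * k := by
    rw [G.dart_card_eq_sum_degrees]
    rw [Finset.sum_congr rfl fun v _ => hreg v, Finset.sum_const, Finset.card_univ]
    simp [mul_comm]
    exact Or.inl rfl
  obtain ⟨j, hj⟩ : ∃ j, k = j + 2 := ⟨k - 2, by omega⟩
  have hnj : n * (k - 2) = n * j := by rw [hj]; simp
  have hnk : n * k = n * j + 2 * n := by rw [hj]; ring
  have hn1 : 1 ≤ n := Fintype.card_pos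
  set e := n * (k - 2) / 2 with he
  have hee : n * j = 2 * (E - n) ∧ e = E - n ∧ 2 * E = e + E + n ∧ n ≤ E := by
    have h5 : 2 * E = n * j + 2 * n := by omega
    have h6 : e = n * j / 2 := by rw [he, hnj]
    omega
  obtain ⟨-, heEn, hEene, hnE⟩ := hee
  -- pass to the field of rational functions
  set φ : ℂ[X] →+* RatFunc ℂ := algebraMap ℂ[X] (RatFunc ℂ) with hφ
  have hφinj : Function.Injective φ := RatFunc.algebraMap_injective ℂ
  set φc : ℂ →+* RatFunc ℂ := φ.comp C with hφc
  set t : RatFunc ℂ := φ X with ht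
  set σF : Matrix V G.Dart (RatFunc ℂ) := (NoutC G).map φc with hσ
  set τF : Matrix V G.Dart (RatFunc ℂ) := (NinC G).map φc with hτ
  set PF : Matrix G.Dart G.Dart (RatFunc ℂ) := (PrevC G).map φc with hPF
  set AF : Matrix V V (RatFunc ℂ) := A.map φc with hAF
  have hAmap : τF * σFᵀ = AF := by
    rw [hσ, hτ, hAF, ← Matrix.transpose_map, ← Matrix.map_mul, Nin_mul_NoutT]
  have hkImap : σF * σFᵀ = (k : RatFunc ℂ) • (1 : Matrix V V (RatFunc ℂ)) := by
    rw [hσ, ← Matrix.transpose_map, ← Matrix.map_mul, Nout_mul_NoutT G hreg]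
    ext i j
    by_cases h : i = j <;>
      simp [Matrix.map_apply, Matrix.smul_apply, Matrix.one_apply, h, map_natCast]
  have hτPmap : τF * PF = σF := by
    rw [hτ, hPF, hσ, ← Matrix.map_mul, Nin_mul_Prev]
  have hPPmap : PF * PF = 1 := by
    rw [hPF, ← Matrix.map_mul, Prev_mul_Prev,
      Matrix.map_one _ (_root_.map_zero φc) (_root_.map_one φc)]
  set SF : Matrix G.Dart G.Dart (RatFunc ℂ) := σFᵀ * τF - PF with hSF
  set c : RatFunc ℂ := t ^ 2 - 1 with hc
  have hcφ : c = φ (X ^ 2 - 1) := by rw [map_sub, map_pow, _root_.map_one, hc, ht]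
  have hc0 : c ≠ 0 := by
    rw [hcφ]
    intro h0
    have h00 : (X ^ 2 - 1 : ℂ[X]) = 0 := hφinj (by simpa using h0)
    exact (Polynomial.monic_X_pow_sub_C (1 : ℂ) two_ne_zero).ne_zero (by simpa using h00)
  have ht0 : t ≠ 0 := by
    rw [ht]
    intro h0
    exact Polynomial.X_ne_zero (hφinj (by simpa using h0))
  -- Step 1: the Bass-type factorization
  have step1 : (t • 1 - SF) * (t • 1 - PF) = c • 1 + σFᵀ * (σF - t • τF) := by
    have expand : (t • 1 - SF) * (t • 1 - PF)
        = t • t • 1 - t • PF - (t • (σFᵀ * τF) - t • PF) + ((σFᵀ * τF) * PF - PF * PF) := by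
      simp only [Matrix.sub_mul, Matrix.mul_sub, Matrix.smul_mul, Matrix.mul_smul, one_mul,
        mul_one, hSF, smul_sub, smul_add]
      abel
    rw [expand, Matrix.mul_assoc, hτPmap, hPPmap, Matrix.mul_sub, Matrix.mul_smul]
    rw [hc, sub_smul, one_smul, smul_smul, ← pow_two]
    abel
  -- Step 3
  have step3 : c • 1 + (σF - t • τF) * σFᵀ = (c + (k : RatFunc ℂ)) • 1 - t • AF := by
    rw [Matrix.sub_mul, Matrix.smul_mul, hkImap, hAmap, add_smul]
    abel
  -- Step 4
  have step4 : ((c + (k : RatFunc ℂ)) • (1 : Matrix V V (RatFunc ℂ)) - t • AF).det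
      = (A.charpoly.roots.map
          (fun l => t ^ 2 - φc l * t + ((k : RatFunc ℂ) - 1))).prod := by
    set y : RatFunc ℂ := (c + (k : RatFunc ℂ)) / t with hy
    have hty : t * y = c + (k : RatFunc ℂ) := by
      rw [hy, mul_div_cancel₀ _ ht0]
    have hmat : (c + (k : RatFunc ℂ)) • (1 : Matrix V V (RatFunc ℂ)) - t • AF
        = t • (y • 1 - AF) := by
      rw [smul_sub, smul_smul, hty]
    rw [hmat, Matrix.det_smul]
    have h5 := ringHom_charpoly (Polynomial.eval₂RingHom φc y) A
    have h6 : ⇑((Polynomial.eval₂RingHom φc y).comp C) = ⇑φc := by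
      funext a; simp
    have h7 : (Polynomial.eval₂RingHom φc y) X = y := by simp
    rw [h6, h7, ← hAF] at h5
    rw [← h5]
    conv_lhs => rw [hfact]
    rw [map_multiset_prod, Multiset.map_map]
    have hpowprod : t ^ n = (A.charpoly.roots.map (fun _ => t)).prod := by
      rw [Multiset.map_const', Multiset.prod_replicate, hcard]
    rw [hpowprod, ← Multiset.prod_map_mul]
    apply congrArg Multiset.prod
    apply Multiset.map_congr rfl
    intro l _
    have h8 : (Polynomial.eval₂RingHom φc y) (X - C l) = y - φc l := by simp
    simp only [Function.comp_apply, h8]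
    linear_combination hty + hc
  -- determinant of t•1 - PF
  have hPdet : (t • 1 - PF).det = c ^ E := by
    have h8 := ringHom_charpoly φ (PrevC G)
    rw [charpoly_PrevC, map_pow, map_sub, map_pow, _root_.map_one, ← hφc, ← ht, ← hPF, ← hE,
      ← hc] at h8
    exact h8.symm
  -- main determinant identity
  have main : (t • 1 - SF).det * (c ^ E * c ^ n)
      = (c ^ e * (A.charpoly.roots.map
          (fun l => t ^ 2 - φc l * t + ((k : RatFunc ℂ) - 1))).prod) * (c ^ E * c ^ n) := by
    have d1 := congrArg Matrix.det step1
    rw [Matrix.det_mul, hPdet] at d1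
    have d2 := det_smul_one_add_mul hc0 (σFᵀ) (σF - t • τF)
    rw [step3, step4] at d2
    have hpow : c ^ (Fintype.card G.Dart) = c ^ e * c ^ E * c ^ n := by
      rw [← pow_add, ← pow_add]
      congr 1
      omega
    rw [hpow] at d2
    linear_combination c ^ n * d1 + d2
  have hdetS : (t • 1 - SF).det
      = c ^ e * (A.charpoly.roots.map
          (fun l => t ^ 2 - φc l * t + ((k : RatFunc ℂ) - 1))).prod :=
    mul_right_cancel₀ (mul_ne_zero (pow_ne_zero _ hc0) (pow_ne_zero _ hc0)) main
  -- conclude by injectivity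
  apply hφinj
  rw [ringHom_charpoly φ]
  have hmapS : ((NoutC G)ᵀ * NinC G - PrevC G).map ⇑(φ.comp C) = SF := by
    rw [← hφc, hSF, hσ, hτ, hPF,
      Matrix.map_sub _ (fun a b => map_sub φc a b), Matrix.map_mul, Matrix.transpose_map]
  rw [hmapS, ← ht, hdetS]
  have hcons : ((k : ℂ)) ::ₘ μ = A.charpoly.roots := by
    rw [hμ]; exact Multiset.cons_erase hkroot
  rw [← hcons, Multiset.map_cons, Multiset.prod_cons]
  have hφC : ∀ a : ℂ, φ (C a) = φc a := fun a => rfl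
  simp only [_root_.map_mul, _root_.map_sub, _root_.map_add, _root_.map_one, map_pow,
    map_multiset_prod, Multiset.map_map, Function.comp_apply, hφC, ← ht, map_natCast]
  have hcsplit : c = (t - 1) * (t + 1) := by rw [hc]; ring
  rw [hcsplit, mul_pow, pow_succ]
  ring
end

section
/- For a k-regular graph G with k > 2, S^+(U²) = (S^+(U))² + I, where U is the quantum walk transition matrix. -/
open Matrix Polynomial

variable {V : Type*} [Fintype V] [DecidableEq V]

lemma dart_eq_iff {G : SimpleGraph V} (e f : G.Dart) :
    e = f ↔ e.fst = f.fst ∧ e.snd = f.snd :=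
  ⟨fun h => by subst h; exact ⟨rfl, rfl⟩,
   fun ⟨h1, h2⟩ => SimpleGraph.Dart.ext _ _ (Prod.ext h1 h2)⟩

lemma dart_sum {G : SimpleGraph V} [DecidableRel G.Adj] (a b : V) (c : G.Dart → ℝ) :
    (∑ e : G.Dart, if e.fst = a ∧ e.snd = b then c e else 0) =
      if h : G.Adj a b then c ⟨(a, b), h⟩ else 0 := by
  split_ifs with h
  · rw [Finset.sum_eq_single (⟨(a, b), h⟩ : G.Dart)]
    · exact if_pos ⟨rfl, rfl⟩
    · intro e _ hne
      rw [if_neg]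
      rintro ⟨h1, h2⟩
      exact hne (SimpleGraph.Dart.ext _ _ (Prod.ext h1 h2))
    · simp
  · apply Finset.sum_eq_zero
    intro e _
    rw [if_neg]
    rintro ⟨h1, h2⟩
    exact h (h1 ▸ h2 ▸ e.adj)

/-- For a k-regular graph with k > 2, S⁺(U²) = (S⁺(U))² + I. -/
theorem stmt16 (G : SimpleGraph V) [DecidableRel G.Adj] (k : ℕ) (hk : 2 < k)
    (hreg : G.IsRegularOfDegree k)
    (U : Matrix G.Dart G.Dart ℝ)
    (hU : U = (2 / (k : ℝ)) • ((Nout G)ᵀ * Nin G) - Prev G) :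
    posSupport (U * U) = posSupport U * posSupport U + 1 := by
  have hk0 : (0 : ℝ) < k := by exact_mod_cast Nat.lt_of_lt_of_le (by norm_num) hk.le
  have hpos : (0 : ℝ) < 2 / k := by positivity
  have hlt : (2 : ℝ) / k < 1 := by
    rw [div_lt_one hk0]; exact_mod_cast hk
  -- entry formula for U
  have hUe : ∀ d e : G.Dart, U d e =
      if e.snd = d.fst then (2 / (k : ℝ) - if e = d.symm then 1 else 0) else 0 := by
    intro d e
    subst hU
    simp only [Matrix.sub_apply, Matrix.smul_apply, Matrix.mul_apply, Nout, Nin, Prev,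
      Matrix.transpose_apply, Matrix.of_apply, smul_eq_mul]
    have step : ∀ v : V, ((if d.fst = v then (1:ℝ) else 0) * if e.snd = v then 1 else 0) =
        if v = d.fst then (if e.snd = d.fst then (1:ℝ) else 0) else 0 := by
      intro v
      by_cases h1 : v = d.fst
      · by_cases h2 : e.snd = d.fst <;> simp [h1, h2]
      · simp [h1, Ne.symm h1]
    rw [Finset.sum_congr rfl (fun v _ => step v)]
    simp only [Finset.sum_ite_eq', Finset.mem_univ, if_true]
    have hsymm : e = d.symm → e.snd = d.fst := fun h => by subst h; rfl
    by_cases h1 : e.snd = d.fst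
    · simp [h1]
    · rw [if_neg h1, if_neg h1, if_neg (fun h => h1 (hsymm h)), mul_zero, sub_zero]
  -- entry formula for posSupport U
  have hSe : ∀ d e : G.Dart, posSupport U d e =
      if e.snd = d.fst ∧ e ≠ d.symm then 1 else 0 := by
    intro d e
    simp only [posSupport, Matrix.of_apply, hUe]
    by_cases h1 : e.snd = d.fst
    · by_cases h2 : e = d.symm
      · rw [if_pos h1, if_pos h2, if_neg (show ¬ (0:ℝ) < 2/(k:ℝ) - 1 by linarith),
          if_neg (fun hx => hx.2 h2)]
      · rw [if_pos h1, if_neg h2, sub_zero, if_pos hpos, if_pos ⟨h1, h2⟩]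
    · rw [if_neg h1, if_neg (lt_irrefl 0), if_neg (fun hx => h1 hx.1)]
  ext d f
  -- compute (U * U) d f
  have hUU : (U * U) d f = if h : G.Adj f.snd d.fst then
      (2 / (k:ℝ) - if f.snd = d.snd then 1 else 0) *
      (2 / (k:ℝ) - if f.fst = d.fst then 1 else 0) else 0 := by
    rw [Matrix.mul_apply]
    have step : ∀ e : G.Dart, U d e * U e f =
        if e.fst = f.snd ∧ e.snd = d.fst then
          ((2 / (k : ℝ) - if e = d.symm then 1 else 0) *
           (2 / (k : ℝ) - if f = e.symm then 1 else 0)) else 0 := by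
      intro e
      rw [hUe d e, hUe e f, ite_zero_mul_ite_zero]
      exact if_congr ⟨fun ⟨x, y⟩ => ⟨y.symm, x⟩, fun ⟨a, b⟩ => ⟨b, a.symm⟩⟩ rfl rfl
    rw [Finset.sum_congr rfl (fun e _ => step e), dart_sum]
    by_cases h : G.Adj f.snd d.fst
    · rw [dif_pos h, dif_pos h]
      set e0 : G.Dart := ⟨(f.snd, d.fst), h⟩ with he0
      have h1 : (e0 = d.symm) ↔ f.snd = d.snd := by
        rw [dart_eq_iff]
        constructor
        · rintro ⟨a, -⟩; exact a
        · intro a; exact ⟨a, rfl⟩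
      have h2 : (f = e0.symm) ↔ f.fst = d.fst := by
        rw [dart_eq_iff]
        constructor
        · rintro ⟨a, -⟩; exact a
        · intro a; exact ⟨a, rfl⟩
      rw [if_congr h1 rfl rfl, if_congr h2 rfl rfl]
    · rw [dif_neg h, dif_neg h]
  -- compute (S * S) d f
  have hSS : (posSupport U * posSupport U) d f =
      if G.Adj f.snd d.fst ∧ f.snd ≠ d.snd ∧ f.fst ≠ d.fst then 1 else 0 := by
    rw [Matrix.mul_apply]
    have step : ∀ e : G.Dart, posSupport U d e * posSupport U e f =
        if e.fst = f.snd ∧ e.snd = d.fst then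
          (if e ≠ d.symm ∧ f ≠ e.symm then (1:ℝ) else 0) else 0 := by
      intro e
      rw [hSe d e, hSe e f, ite_zero_mul_ite_zero, one_mul]
      have hiff : ((e.snd = d.fst ∧ e ≠ d.symm) ∧ f.snd = e.fst ∧ f ≠ e.symm) ↔
          ((e.fst = f.snd ∧ e.snd = d.fst) ∧ (e ≠ d.symm ∧ f ≠ e.symm)) := by
        constructor
        · rintro ⟨⟨a, b⟩, cc, xx⟩
          exact ⟨⟨cc.symm, a⟩, b, xx⟩
        · rintro ⟨⟨cc, a⟩, b, xx⟩
          exact ⟨⟨a, b⟩, cc.symm, xx⟩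
      rw [if_congr hiff rfl rfl, ite_and]
    rw [Finset.sum_congr rfl (fun e _ => step e), dart_sum]
    by_cases h : G.Adj f.snd d.fst
    · rw [dif_pos h]
      set e0 : G.Dart := ⟨(f.snd, d.fst), h⟩ with he0
      have h1 : (e0 = d.symm) ↔ f.snd = d.snd := by
        rw [dart_eq_iff]
        exact ⟨fun hx => hx.1, fun a => ⟨a, rfl⟩⟩
      have h2 : (f = e0.symm) ↔ f.fst = d.fst := by
        rw [dart_eq_iff]
        exact ⟨fun hx => hx.1, fun a => ⟨a, rfl⟩⟩
      refine if_congr ?_ rfl rfl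
      constructor
      · rintro ⟨b1, b2⟩
        exact ⟨h, fun hh => b1 (h1.mpr hh), fun hh => b2 (h2.mpr hh)⟩
      · rintro ⟨-, b1, b2⟩
        exact ⟨fun hh => b1 (h1.mp hh), fun hh => b2 (h2.mp hh)⟩
    · rw [dif_neg h, if_neg (fun hx => h hx.1)]
  -- put it together
  have hone : (1 : Matrix G.Dart G.Dart ℝ) d f = if d = f then 1 else 0 := Matrix.one_apply
  rw [Matrix.add_apply, hSS, hone]
  show (if 0 < (U * U) d f then (1:ℝ) else 0) = _
  rw [hUU]
  by_cases hadj : G.Adj f.snd d.fst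
  · rw [dif_pos hadj]
    by_cases hP : f.snd = d.snd <;> by_cases hQ : f.fst = d.fst
    · have hdf : d = f := (dart_eq_iff d f).2 ⟨hQ.symm, hP.symm⟩
      rw [if_pos hP, if_pos hQ,
        if_pos (show (0:ℝ) < (2/(k:ℝ)-1)*(2/(k:ℝ)-1) by nlinarith),
        if_neg (fun hx => hx.2.1 hP), if_pos hdf]
      norm_num
    · rw [if_pos hP, if_neg hQ, sub_zero,
        if_neg (show ¬ (0:ℝ) < (2/(k:ℝ)-1)*(2/(k:ℝ)) by nlinarith),
        if_neg (fun hx => hx.2.1 hP),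
        if_neg (show ¬ d = f by rintro rfl; exact hQ rfl)]
      norm_num
    · rw [if_neg hP, if_pos hQ, sub_zero,
        if_neg (show ¬ (0:ℝ) < (2/(k:ℝ))*(2/(k:ℝ)-1) by nlinarith),
        if_neg (fun hx => hx.2.2 hQ),
        if_neg (show ¬ d = f by rintro rfl; exact hP rfl)]
      norm_num
    · rw [if_neg hP, if_neg hQ, sub_zero,
        if_pos (show (0:ℝ) < (2/(k:ℝ))*(2/(k:ℝ)) by positivity),
        if_pos ⟨hadj, hP, hQ⟩,
        if_neg (show ¬ d = f by rintro rfl; exact hP rfl)]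
      norm_num
  · rw [dif_neg hadj, if_neg (lt_irrefl (0:ℝ)), if_neg (fun hx => hadj hx.1),
      if_neg (show ¬ d = f by rintro rfl; exact hadj d.adj.symm)]
    norm_num
end

section
/- For a k-regular graph G with k > 2, the entrywise identity S^+(U²) = (N_out^T·N_in)² − N_out^T·N_out − N_in^T·N_in + 2I holds, where the negative entries of U² occur exactly at pairs of arcs sharing the same head but not the same tail, or the same tail but not the same head. -/
open Matrix Polynomial

variable {V : Type*} [Fintype V] [DecidableEq V]

lemma hA (G : SimpleGraph V) (d e : G.Dart) :
    ((Nout G)ᵀ * Nin G) d e = if d.fst = e.snd then 1 else 0 := by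
  simp [Matrix.mul_apply, Nout, Nin, ite_and, eq_comm, Finset.sum_ite_eq]

lemma hNoNo (G : SimpleGraph V) (d e : G.Dart) :
    ((Nout G)ᵀ * Nout G) d e = if d.fst = e.fst then 1 else 0 := by
  simp [Matrix.mul_apply, Nout, ite_and, eq_comm, Finset.sum_ite_eq]

lemma hNiNi (G : SimpleGraph V) (d e : G.Dart) :
    ((Nin G)ᵀ * Nin G) d e = if d.snd = e.snd then 1 else 0 := by
  simp [Matrix.mul_apply, Nin, ite_and, eq_comm, Finset.sum_ite_eq]

lemma hA2 (G : SimpleGraph V) [DecidableRel G.Adj] (d e : G.Dart) :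
    (((Nout G)ᵀ * Nin G) * ((Nout G)ᵀ * Nin G)) d e
      = if G.Adj e.snd d.fst then 1 else 0 := by
  rw [Matrix.mul_apply]
  simp only [hA]
  by_cases h : G.Adj e.snd d.fst
  · rw [if_pos h]
    rw [Finset.sum_eq_single (⟨(e.snd, d.fst), h⟩ : G.Dart)]
    · simp
    · intro f _ hf
      rcases eq_or_ne d.fst f.snd with h1 | h1
      · rcases eq_or_ne f.fst e.snd with h2 | h2
        · exact absurd (SimpleGraph.Dart.ext _ _ (Prod.ext h2 h1.symm)) hf
        · simp [h2]
      · simp [h1]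
    · simp
  · rw [if_neg h]
    apply Finset.sum_eq_zero
    intro f _
    rcases eq_or_ne d.fst f.snd with h1 | h1
    · rcases eq_or_ne f.fst e.snd with h2 | h2
      · exact absurd (h2 ▸ h1 ▸ f.adj) h
      · simp [h2]
    · simp [h1]

lemma hAP (G : SimpleGraph V) [DecidableRel G.Adj] (d e : G.Dart) :
    (((Nout G)ᵀ * Nin G) * Prev G) d e = if d.fst = e.fst then 1 else 0 := by
  rw [Matrix.mul_apply]
  have key : ∀ f : G.Dart, ((Nout G)ᵀ * Nin G) d f * Prev G f e
      = if f = e.symm then ((Nout G)ᵀ * Nin G) d e.symm else 0 := by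
    intro f
    simp only [Prev, Matrix.of_apply]
    by_cases hf : f = e.symm
    · subst hf; simp
    · rw [if_neg hf, if_neg]
      · ring
      · intro he; exact hf (by rw [he]; simp)
  rw [Finset.sum_congr rfl (fun f _ => key f), Finset.sum_ite_eq']
  simp [hA]

lemma hPA (G : SimpleGraph V) [DecidableRel G.Adj] (d e : G.Dart) :
    (Prev G * ((Nout G)ᵀ * Nin G)) d e = if d.snd = e.snd then 1 else 0 := by
  rw [Matrix.mul_apply]
  have key : ∀ f : G.Dart, Prev G d f * ((Nout G)ᵀ * Nin G) f e
      = if f = d.symm then ((Nout G)ᵀ * Nin G) d.symm e else 0 := by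
    intro f
    simp only [Prev, Matrix.of_apply]
    by_cases hf : f = d.symm
    · subst hf; simp
    · rw [if_neg hf, if_neg hf]; ring
  rw [Finset.sum_congr rfl (fun f _ => key f), Finset.sum_ite_eq']
  simp [hA]

lemma hPP (G : SimpleGraph V) [DecidableRel G.Adj] (d e : G.Dart) :
    (Prev G * Prev G) d e = if d = e then 1 else 0 := by
  rw [Matrix.mul_apply]
  have key : ∀ f : G.Dart, Prev G d f * Prev G f e
      = if f = d.symm then Prev G d.symm e else 0 := by
    intro f
    simp only [Prev, Matrix.of_apply]
    by_cases hf : f = d.symm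
    · subst hf; simp
    · rw [if_neg hf, if_neg hf]; ring
  rw [Finset.sum_congr rfl (fun f _ => key f), Finset.sum_ite_eq']
  simp [Prev, eq_comm]

lemma entryUU (G : SimpleGraph V) [DecidableRel G.Adj] (k : ℕ)
    (U : Matrix G.Dart G.Dart ℝ)
    (hU : U = (2 / (k : ℝ)) • ((Nout G)ᵀ * Nin G) - Prev G) (d e : G.Dart) :
    (U * U) d e = (2 / (k:ℝ)) * (2 / (k:ℝ)) * (if G.Adj e.snd d.fst then 1 else 0)
      - (2 / (k:ℝ)) * (if d.fst = e.fst then 1 else 0)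
      - (2 / (k:ℝ)) * (if d.snd = e.snd then 1 else 0)
      + (if d = e then 1 else 0) := by
  subst hU
  simp only [Matrix.sub_mul, Matrix.mul_sub, Matrix.smul_mul, Matrix.mul_smul,
    Matrix.sub_apply, Matrix.smul_apply, smul_eq_mul, hA2, hAP, hPA, hPP, smul_smul]
  ring

/-- For k > 2, S⁺(U²) = (N_out^T N_in)² - N_out^T N_out - N_in^T N_in + 2I, and the
negative entries of U² occur exactly at pairs of arcs with the same tail but different
heads, or the same head but different tails. -/
theorem stmt17 (G : SimpleGraph V) [DecidableRel G.Adj] (k : ℕ) (hk : 2 < k)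
    (hreg : G.IsRegularOfDegree k)
    (U : Matrix G.Dart G.Dart ℝ)
    (hU : U = (2 / (k : ℝ)) • ((Nout G)ᵀ * Nin G) - Prev G) :
    posSupport (U * U) =
        ((Nout G)ᵀ * Nin G) * ((Nout G)ᵀ * Nin G) - (Nout G)ᵀ * Nout G -
          (Nin G)ᵀ * Nin G + (2 : ℝ) • 1 ∧
      ∀ d e : G.Dart, (U * U) d e < 0 ↔
        ((d.snd = e.snd ∧ d.fst ≠ e.fst) ∨ (d.fst = e.fst ∧ d.snd ≠ e.snd)) := by
  have hk' : (2:ℝ) < k := by exact_mod_cast hk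
  have hkpos : (0:ℝ) < k := by linarith
  set s : ℝ := 2 / (k:ℝ) with hs
  have hs0 : 0 < s := by positivity
  have hs1 : s < 1 := (div_lt_one hkpos).2 hk'
  constructor
  · ext d e
    show (if 0 < (U * U) d e then (1:ℝ) else 0) = _
    rw [entryUU G k U hU d e]
    simp only [Matrix.add_apply, Matrix.sub_apply, Matrix.smul_apply, Matrix.one_apply,
      hA2, hNoNo, hNiNi, smul_eq_mul]
    by_cases h1 : d.fst = e.fst <;> by_cases h2 : d.snd = e.snd
    · have hde : d = e := SimpleGraph.Dart.ext _ _ (Prod.ext h1 h2)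
      subst hde
      have hadj : G.Adj d.snd d.fst := d.adj.symm
      simp only [hadj, if_pos rfl, if_true]
      rw [if_pos (by nlinarith)]
      ring
    · have hde : d ≠ e := fun h => h2 (by rw [h])
      have hadj : G.Adj e.snd e.fst := e.adj.symm
      simp only [h1, h2, hde, hadj, if_true, if_false, if_pos rfl]
      rw [if_neg (by nlinarith)]
      ring
    · have hde : d ≠ e := fun h => h1 (by rw [h])
      have hadj : G.Adj e.snd d.fst := by rw [← h2]; exact d.adj.symm
      simp only [h1, h2, hde, hadj, if_true, if_false, if_pos rfl]
      rw [if_neg (by nlinarith)]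
      ring
    · have hde : d ≠ e := fun h => h1 (by rw [h])
      simp only [h1, h2, hde, if_false]
      by_cases hadj : G.Adj e.snd d.fst
      · simp only [hadj, if_true]
        rw [if_pos (by nlinarith)]
        norm_num
      · simp only [hadj, if_false]
        rw [if_neg (by norm_num)]
        norm_num
  · intro d e
    rw [entryUU G k U hU d e]
    by_cases h1 : d.fst = e.fst <;> by_cases h2 : d.snd = e.snd
    · have hde : d = e := SimpleGraph.Dart.ext _ _ (Prod.ext h1 h2)
      subst hde
      have hadj : G.Adj d.snd d.fst := d.adj.symm
      simp only [hadj, if_pos rfl, if_true, ne_eq, not_true_eq_false,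
        and_false, false_and, and_true, or_self, iff_false, not_lt]
      nlinarith
    · have hde : d ≠ e := fun h => h2 (by rw [h])
      have hadj : G.Adj e.snd e.fst := e.adj.symm
      simp only [h1, h2, hde, hadj, if_true, if_false, ne_eq, not_false_eq_true,
        and_true, false_and, false_or, iff_true]
      nlinarith
    · have hde : d ≠ e := fun h => h1 (by rw [h])
      have hadj : G.Adj e.snd d.fst := by rw [← h2]; exact d.adj.symm
      simp only [h1, h2, hde, hadj, if_true, if_false, ne_eq, not_false_eq_true,
        and_true, false_and, true_and, or_false, iff_true]
      nlinarith
    · have hde : d ≠ e := fun h => h1 (by rw [h])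
      simp only [h1, h2, hde, if_false, false_and, or_self, iff_false, not_lt]
      by_cases hadj : G.Adj e.snd d.fst
      · simp only [hadj, if_true]; nlinarith
      · simp only [hadj, if_false]; norm_num
end
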